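/- Let R be a commutative ring, T a ℤ-indexed acyclic cochain complex of finitely generated free R-modules, and J an R-module of finite projective dimension. Then the complex T ⊗_R J, obtained by applying the functor − ⊗_R J to T degreewise, is acyclic. -/

import Mathlib

open CategoryTheory CategoryTheory.Limits CategoryTheory.MonoidalCategory

/-- A module has finite projective dimension if it admits a projective resolution
which vanishes in all sufficiently high degrees. -/
def HasFiniteProjectiveDimension {R : Type u} [Ring R] (J : ModuleCat.{u} R) : Prop :=
  ∃ (P : ProjectiveResolution J) (n : ℕ), ∀ i : ℕ, n < i → IsZero (P.complex.X i)

namespace AcyclicTensorAux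

open LinearMap TensorProduct

variable {R : Type u} [CommRing R]

/-- Elementary data of a flat resolution of length `≤ n`. -/
structure Res (R : Type u) [CommRing R] (M : Type u) [AddCommGroup M] [Module R M]
    (n : ℕ) : Type (u + 1) where
  P : ℕ → Type u
  [acg : ∀ k, AddCommGroup (P k)]
  [mod : ∀ k, Module R (P k)]
  flat : ∀ k, Module.Flat R (P k)
  d : ∀ k, P (k + 1) →ₗ[R] P k
  ε : P 0 →ₗ[R] M
  surj : Function.Surjective ε
  ex0 : Function.Exact (d 0) ε
  ex : ∀ k, Function.Exact (d (k + 1)) (d k)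
  small : ∀ k, n < k → ∀ x : P k, x = 0

attribute [instance] Res.acg Res.mod

lemma comm_aux {X Y N N' : Type u} [AddCommGroup X] [AddCommGroup Y] [AddCommGroup N]
    [AddCommGroup N'] [Module R X] [Module R Y] [Module R N] [Module R N']
    (dd : X →ₗ[R] Y) (φ : N →ₗ[R] N') (x : X ⊗[R] N) :
    lTensor Y φ (rTensor N dd x) = rTensor N' dd (lTensor X φ x) := by
  induction x with
  | zero => simp
  | tmul a b => simp
  | add a b ha hb => simp [map_add, ha, hb]

/-- The diagram chase: in a degreewise short exact sequence of (pieces of) complexes,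
if the first two rows are exact, so is the third. -/
lemma chase {A₁ A₂ A₃ B₀ B₁ B₂ B₃ C₀ C₁ C₂ : Type u}
    [AddCommGroup A₁] [AddCommGroup A₂] [AddCommGroup A₃]
    [AddCommGroup B₀] [AddCommGroup B₁] [AddCommGroup B₂] [AddCommGroup B₃]
    [AddCommGroup C₀] [AddCommGroup C₁] [AddCommGroup C₂]
    [Module R A₁] [Module R A₂] [Module R A₃]
    [Module R B₀] [Module R B₁] [Module R B₂] [Module R B₃]
    [Module R C₀] [Module R C₁] [Module R C₂]
    (dA₁ : A₁ →ₗ[R] A₂) (dA₂ : A₂ →ₗ[R] A₃)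
    (dB₀ : B₀ →ₗ[R] B₁) (dB₁ : B₁ →ₗ[R] B₂) (dB₂ : B₂ →ₗ[R] B₃)
    (dC₀ : C₀ →ₗ[R] C₁) (dC₁ : C₁ →ₗ[R] C₂)
    (f₁ : A₁ →ₗ[R] B₁) (f₂ : A₂ →ₗ[R] B₂) (f₃ : A₃ →ₗ[R] B₃)
    (g₀ : B₀ →ₗ[R] C₀) (g₁ : B₁ →ₗ[R] C₁) (g₂ : B₂ →ₗ[R] C₂)
    (hA : Function.Exact dA₁ dA₂)
    (hB : Function.Exact dB₀ dB₁)
    (hf₃ : Function.Injective f₃)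
    (hg₁ : Function.Surjective g₁)
    (hfg₁ : Function.Exact f₁ g₁)
    (hfg₂ : Function.Exact f₂ g₂)
    (commf₂ : ∀ a, f₂ (dA₁ a) = dB₁ (f₁ a))
    (commf₃ : ∀ a, f₃ (dA₂ a) = dB₂ (f₂ a))
    (commg₁ : ∀ b, g₁ (dB₀ b) = dC₀ (g₀ b))
    (commg₂ : ∀ b, g₂ (dB₁ b) = dC₁ (g₁ b))
    (hdB : ∀ b, dB₂ (dB₁ b) = 0)
    (hdC : ∀ x, dC₁ (dC₀ x) = 0) :
    Function.Exact dC₀ dC₁ := by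
  intro c
  constructor
  · intro hc
    obtain ⟨b, rfl⟩ := hg₁ c
    have h1 : g₂ (dB₁ b) = 0 := by rw [commg₂, hc]
    obtain ⟨a, ha⟩ := (hfg₂ _).1 h1
    have h3 : dA₂ a = 0 := by
      apply hf₃
      rw [commf₃, ha, hdB, map_zero]
    obtain ⟨a', ha'⟩ := (hA _).1 h3
    have h4 : dB₁ (b - f₁ a') = 0 := by
      rw [map_sub, ← commf₂, ha', ha, sub_self]
    obtain ⟨b', hb'⟩ := (hB _).1 h4
    refine ⟨g₀ b', ?_⟩
    rw [← commg₁, hb', map_sub, hfg₁.apply_apply_eq_zero, sub_zero]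
  · rintro ⟨x, rfl⟩
    exact hdC x

variable (T : CochainComplex (ModuleCat.{u} R) ℤ)

lemma flat_case
    (hex : ∀ i : ℤ, Function.Exact (T.d (i - 1) i) (T.d i (i + 1)))
    (M : Type u) [AddCommGroup M] [Module R M] [Module.Flat R M] (i : ℤ) :
    Function.Exact (rTensor M (T.d (i - 1) i).hom) (rTensor M (T.d i (i + 1)).hom) :=
  Module.Flat.rTensor_exact M (hex i)

lemma main
    (hflat : ∀ i : ℤ, Module.Flat R (T.X i))
    (hex : ∀ i : ℤ, Function.Exact (T.d (i - 1) i) (T.d i (i + 1))) :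
    ∀ (n : ℕ) (M : Type u) [AddCommGroup M] [Module R M], Res R M n → ∀ i : ℤ,
      Function.Exact (rTensor M (T.d (i - 1) i).hom) (rTensor M (T.d i (i + 1)).hom) := by
  intro n
  induction n with
  | zero =>
    intro M _ _ res i
    have hinj : Function.Injective res.ε := by
      intro x y hxy
      have h0 : res.ε (x - y) = 0 := by rw [map_sub, hxy, sub_self]
      obtain ⟨z, hz⟩ := (res.ex0 _).1 h0
      rw [res.small 1 one_pos z, map_zero] at hz
      exact sub_eq_zero.mp hz.symm
    let e : res.P 0 ≃ₗ[R] M := LinearEquiv.ofBijective res.ε ⟨hinj, res.surj⟩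
    haveI := res.flat 0
    haveI : Module.Flat R M := Module.Flat.of_linearEquiv e.symm
    exact flat_case T hex M i
  | succ n ih =>
    intro M _ _ res i
    haveI := res.flat 0
    set K := LinearMap.ker res.ε with hK
    have hmem : ∀ x, res.d 0 x ∈ K := fun x => res.ex0.apply_apply_eq_zero x
    let res' : Res R K n :=
      { P := fun k => res.P (k + 1)
        flat := fun k => res.flat (k + 1)
        d := fun k => res.d (k + 1)
        ε := (res.d 0).codRestrict K hmem
        surj := by
          rintro ⟨y, hy⟩
          obtain ⟨x, hx⟩ := (res.ex0 y).1 hy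
          exact ⟨x, Subtype.ext hx⟩
        ex0 := by
          intro y
          rw [Set.mem_range]
          constructor
          · intro h
            have : res.d 0 y = 0 := congrArg Subtype.val h
            exact (res.ex 0 y).1 this
          · rintro ⟨x, rfl⟩
            exact Subtype.ext ((res.ex 0).apply_apply_eq_zero x)
        ex := fun k => res.ex (k + 1)
        small := fun k hk x => res.small (k + 1) (by omega) x }
    have hA := ih K res'
    have hB := flat_case T hex (res.P 0) 
    -- short exact sequence  K ↪ P 0 ↠ M
    have hsub : Function.Exact (K.subtype) res.ε := res.ε.exact_subtype_ker_map
    have hd12 : ∀ b, rTensor (res.P 0) (T.d (i + 1) (i + 2)).hom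
        (rTensor (res.P 0) (T.d i (i + 1)).hom b) = 0 := by
      intro b
      rw [← rTensor_comp_apply]
      have : (T.d (i + 1) (i + 2)).hom.comp (T.d i (i + 1)).hom = 0 := by
        rw [← ModuleCat.hom_comp, T.d_comp_d i (i + 1) (i + 2), ModuleCat.hom_zero]
      rw [this, rTensor_zero, LinearMap.zero_apply]
    have hdC : ∀ x, rTensor M (T.d i (i + 1)).hom (rTensor M (T.d (i - 1) i).hom x) = 0 := by
      intro x
      rw [← rTensor_comp_apply]
      have : (T.d i (i + 1)).hom.comp (T.d (i - 1) i).hom = 0 := by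
        rw [← ModuleCat.hom_comp, T.d_comp_d (i - 1) i (i + 1), ModuleCat.hom_zero]
      rw [this, rTensor_zero, LinearMap.zero_apply]
    refine chase (rTensor (K : Type u) (T.d i (i + 1)).hom) (rTensor (K : Type u) (T.d (i + 1) (i + 2)).hom)
      (rTensor (res.P 0) (T.d (i - 1) i).hom) (rTensor (res.P 0) (T.d i (i + 1)).hom)
      (rTensor (res.P 0) (T.d (i + 1) (i + 2)).hom)
      (rTensor M (T.d (i - 1) i).hom) (rTensor M (T.d i (i + 1)).hom)
      (lTensor (T.X i) K.subtype) (lTensor (T.X (i + 1)) K.subtype)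
      (lTensor (T.X (i + 2)) K.subtype)
      (lTensor (T.X (i - 1)) res.ε) (lTensor (T.X i) res.ε) (lTensor (T.X (i + 1)) res.ε)
      ?_ (hB i) ?_ ?_ ?_ ?_
      (fun a => (comm_aux (T.d i (i + 1)).hom K.subtype a).symm ▸ rfl)
      (fun a => by rw [comm_aux])
      (fun b => by rw [comm_aux])
      (fun b => by rw [comm_aux])
      hd12 hdC
    · have h := hA (i + 1)
      rw [show i + 1 - 1 = i from by ring, show i + 1 + 1 = i + 2 from by ring] at h
      exact h
    · haveI := hflat (i + 2)
      exact Module.Flat.lTensor_preserves_injective_linearMap K.subtype K.injective_subtype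
    · exact LinearMap.lTensor_surjective _ res.surj
    · exact lTensor_exact (T.X i) hsub res.surj
    · exact lTensor_exact (T.X (i + 1)) hsub res.surj

end AcyclicTensorAux

/-- **Acyclicity of the tensor product with a module of finite projective dimension.**
If `T` is a ℤ-indexed acyclic cochain complex of finitely generated free `R`-modules and
`J` is an `R`-module of finite projective dimension, then the complex `T ⊗_R J`,
obtained by applying `− ⊗_R J` to `T` degreewise, is acyclic. -/
theorem acyclic_tensor_of_finite_projective_dimension
    {R : Type u} [CommRing R]
    (T : CochainComplex (ModuleCat.{u} R) ℤ)
    (hfree : ∀ i : ℤ, Module.Free R (T.X i))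
    (hfin : ∀ i : ℤ, Module.Finite R (T.X i))
    (hacyclic : ∀ i : ℤ, T.ExactAt i)
    (J : ModuleCat.{u} R) (hJ : HasFiniteProjectiveDimension J) :
    ∀ i : ℤ,
      (((tensorRight J).mapHomologicalComplex (ComplexShape.up ℤ)).obj T).ExactAt i := by
  classical
  open LinearMap TensorProduct AcyclicTensorAux in
  have hflat : ∀ i : ℤ, Module.Flat R (T.X i) := fun i => by
    haveI := hfree i; infer_instance
  have hex : ∀ i : ℤ, Function.Exact (T.d (i - 1) i) (T.d i (i + 1)) := by
    intro i
    have h := (HomologicalComplex.exactAt_iff' T (i - 1) i (i + 1)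
      (CochainComplex.prev ℤ i) (CochainComplex.next ℤ i)).1 (hacyclic i)
    exact (CategoryTheory.ShortComplex.ShortExact.moduleCat_exact_iff_function_exact _).1 h
  obtain ⟨P, n, hn⟩ := hJ
  -- build the elementary resolution data
  haveI : ∀ k, Module.Projective R (P.complex.X k) := fun k =>
    (IsProjective.iff_projective (P.complex.X k)).2 (P.projective k)
  let e : ((ChainComplex.single₀ (ModuleCat R)).obj J).X 0 ≅ J :=
    HomologicalComplex.singleObjXSelf (ComplexShape.down ℕ) 0 J
  have hepi : Function.Surjective (P.π.f 0) :=
    (ModuleCat.epi_iff_surjective (P.π.f 0)).1 inferInstance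
  have hesurj : Function.Surjective e.hom := e.toLinearEquiv.surjective
  have heinj : Function.Injective e.hom := e.toLinearEquiv.injective
  have hex0 : Function.Exact (P.complex.d 1 0) (P.π.f 0) :=
    (CategoryTheory.ShortComplex.ShortExact.moduleCat_exact_iff_function_exact _).1 P.exact₀
  let res : AcyclicTensorAux.Res R (J : Type u) n :=
    { P := fun k => (P.complex.X k : Type u)
      flat := fun k => inferInstance
      d := fun k => (P.complex.d (k + 1) k).hom
      ε := e.hom.hom.comp (P.π.f 0).hom
      surj := hesurj.comp hepi
      ex0 := by
        intro y
        rw [Set.mem_range]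
        constructor
        · intro h
          have : P.π.f 0 y = 0 := by
            apply heinj
            rw [map_zero]; exact h
          exact (hex0 y).1 this
        · rintro ⟨x, rfl⟩
          have h := hex0.apply_apply_eq_zero x
          show e.hom ((P.π.f 0) ((P.complex.d 1 0) x)) = 0
          rw [h, map_zero]
      ex := fun k =>
        (CategoryTheory.ShortComplex.ShortExact.moduleCat_exact_iff_function_exact _).1
          (P.exact_succ k)
      small := fun k hk x => by
        have hz := hn k hk
        have h1 : (𝟙 (P.complex.X k) : P.complex.X k ⟶ P.complex.X k) = 0 :=
          hz.eq_of_src _ _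
        calc x = (𝟙 (P.complex.X k) : P.complex.X k ⟶ P.complex.X k) x := rfl
        _ = (0 : P.complex.X k ⟶ P.complex.X k) x := by rw [h1]
        _ = 0 := rfl }
  intro i
  rw [HomologicalComplex.exactAt_iff' _ (i - 1) i (i + 1)
    (CochainComplex.prev ℤ i) (CochainComplex.next ℤ i)]
  rw [CategoryTheory.ShortComplex.ShortExact.moduleCat_exact_iff_function_exact]
  exact AcyclicTensorAux.main T hflat hex n (J : Type u) res i
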